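/- Knight's identity: for all real u and v, ρ_τ(u − v) − ρ_τ(u) = v·(𝟙(u ≤ 0) − τ) + ∫₀^v (𝟙(u ≤ s) − 𝟙(u ≤ 0)) ds. -/
import Mathlib

open Set intervalIntegral

lemma indicator_integral_key (u v : ℝ) :
    ∫ s in (0:ℝ)..v, (if u ≤ s then (1:ℝ) else 0)
      = max (v - u) 0 - max (0 - u) 0 := by
  have hmono : Monotone (fun s : ℝ => if u ≤ s then (1:ℝ) else 0) := by
    intro a b hab
    by_cases h : u ≤ a
    · simp [h, h.trans hab]
    · simp only [if_neg h]
      split_ifs <;> norm_num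
  have hint : IntervalIntegrable (fun s : ℝ => if u ≤ s then (1:ℝ) else 0)
      MeasureTheory.volume 0 v := hmono.intervalIntegrable
  have hcont : ContinuousOn (fun s : ℝ => max (s - u) 0) (uIcc 0 v) :=
    (continuous_id.sub continuous_const).max continuous_const |>.continuousOn
  have hderiv : ∀ x ∈ Ioo (min (0:ℝ) v) (max 0 v),
      HasDerivWithinAt (fun s : ℝ => max (s - u) 0)
        (if u ≤ x then (1:ℝ) else 0) (Ioi x) x := by
    intro x _
    by_cases hx : u ≤ x
    · rw [if_pos hx]
      have : HasDerivWithinAt (fun s : ℝ => s - u) 1 (Ioi x) x :=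
        ((hasDerivAt_id x).sub_const u).hasDerivWithinAt
      apply this.congr
      · intro y hy
        have : u ≤ y := hx.trans (le_of_lt hy)
        simp [max_eq_left (by linarith : (0:ℝ) ≤ y - u)]
      · simp [max_eq_left (by linarith : (0:ℝ) ≤ x - u)]
    · rw [if_neg hx]
      push_neg at hx
      have : HasDerivWithinAt (fun _ : ℝ => (0:ℝ)) 0 (Ioi x) x :=
        (hasDerivAt_const x 0).hasDerivWithinAt
      apply this.congr_of_eventuallyEq
      · filter_upwards [eventually_nhdsWithin_of_eventually_nhds
          (Filter.Tendsto.eventually_lt_const hx (Filter.tendsto_id))] with y hy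
        simp only [id] at hy
        simp [max_eq_right (by linarith : y - u ≤ (0:ℝ))]
      · simp [max_eq_right (by linarith : x - u ≤ (0:ℝ))]
  have := integral_eq_sub_of_hasDeriv_right hcont hderiv hint
  simpa using this

/-- Knight's identity for the quantile check function
`ρ_τ(u) = (τ - 𝟙(u < 0)) u`. -/
theorem knight_identity (τ : ℝ) (hτ : τ ∈ Set.Ioo (0:ℝ) 1) (u v : ℝ) :
    (τ - if u - v < 0 then (1:ℝ) else 0) * (u - v)
      - (τ - if u < 0 then (1:ℝ) else 0) * u
    = v * ((if u ≤ 0 then (1:ℝ) else 0) - τ)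
      + ∫ s in (0:ℝ)..v, ((if u ≤ s then (1:ℝ) else 0) - (if u ≤ 0 then (1:ℝ) else 0)) := by
  have hmono : Monotone (fun s : ℝ => if u ≤ s then (1:ℝ) else 0) := by
    intro a b hab
    by_cases h : u ≤ a
    · simp [h, h.trans hab]
    · simp only [if_neg h]
      split_ifs <;> norm_num
  have hint : IntervalIntegrable (fun s : ℝ => if u ≤ s then (1:ℝ) else 0)
      MeasureTheory.volume 0 v := hmono.intervalIntegrable
  have hconst : IntervalIntegrable (fun _ : ℝ => (if u ≤ 0 then (1:ℝ) else 0))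
      MeasureTheory.volume 0 v := intervalIntegrable_const
  rw [intervalIntegral.integral_sub hint hconst, indicator_integral_key,
    intervalIntegral.integral_const]
  simp only [smul_eq_mul, sub_zero]
  have e1 : (if u - v < 0 then (1:ℝ) else 0) * (u - v) = - max (v - u) 0 := by
    split_ifs with h
    · rw [max_eq_left (by linarith)]; ring
    · rw [max_eq_right (by linarith)]; ring
  have e2 : (if u < 0 then (1:ℝ) else 0) * u = - max (0 - u) 0 := by
    split_ifs with h
    · rw [max_eq_left (by linarith)]; ring
    · rw [max_eq_right (by linarith)]; ring
  linear_combination -e1 + e2
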